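/- Let λ > 0, let x₁,…,x_n ∈ R^m be arbitrary vectors, and set V_t = λ I_m + Σ_{u=1}^t x_u x_u⊤ (so V_0 = λ I_m). Then Σ_{t=1}^n min{ 1, x_t⊤ V_{t-1}^{-1} x_t } ≤ 2 · log( det(V_n) / det(λ I_m) ). -/

import Mathlib

open Finset

noncomputable section

private lemma min_one_le_two_log {u : ℝ} (hu : 0 ≤ u) :
    min 1 u ≤ 2 * Real.log (1 + u) := by
  have key : ∀ v : ℝ, 0 ≤ v → v ≤ 1 → v ≤ 2 * Real.log (1 + v) := by
    intro v hv0 hv1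
    have h1 : (0:ℝ) < 1 + v := by linarith
    have h4 : (0:ℝ) < 1 - v / 2 := by linarith
    have h3 : 1 - v / 2 ≤ Real.exp (-(v / 2)) := by
      have := Real.add_one_le_exp (-(v / 2)); linarith
    have e1 : Real.exp (v / 2) * Real.exp (-(v / 2)) = 1 := by
      rw [← Real.exp_add]; simp
    have e2 : Real.exp (v / 2) * (1 - v / 2) ≤ 1 := by
      nlinarith [Real.exp_pos (v / 2)]
    have h2 : Real.exp (v / 2) ≤ 1 + v := by nlinarith
    have := (Real.le_log_iff_exp_le h1).2 h2
    linarith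
  rcases le_total u 1 with h | h
  · have := key u hu h
    rw [min_eq_right h]; exact this
  · have h1 := key 1 zero_le_one le_rfl
    have hlog : Real.log (1 + 1) ≤ Real.log (1 + u) :=
      Real.log_le_log (by norm_num) (by linarith)
    rw [min_eq_left h]; linarith

/-- **Elliptical potential lemma.**
Let `λ > 0`, let `x₁, …, x_n ∈ ℝ^m` be arbitrary vectors and set
`V_t = λ I_m + ∑_{u=1}^t x_u x_u⊤` (so `V_0 = λ I_m`).  Then
`∑_{t=1}^n min{1, x_t⊤ V_{t-1}⁻¹ x_t} ≤ 2 log(det V_n / det (λ I_m))`. -/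
theorem elliptical_potential (m n : ℕ) (lam : ℝ) (hlam : 0 < lam)
    (x : Fin n → Fin m → ℝ) (V : ℕ → Matrix (Fin m) (Fin m) ℝ)
    (hV : ∀ t : ℕ, V t = lam • (1 : Matrix (Fin m) (Fin m) ℝ) +
      ∑ u ∈ Finset.univ.filter (fun u : Fin n => (u : ℕ) < t),
        Matrix.vecMulVec (x u) (x u)) :
    ∑ t : Fin n, min 1 (dotProduct (x t) ((V (t : ℕ))⁻¹.mulVec (x t))) ≤
      2 * Real.log ((V n).det / (lam • (1 : Matrix (Fin m) (Fin m) ℝ)).det) := by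
  classical
  set q : Fin n → ℝ := fun t => dotProduct (x t) ((V (t : ℕ))⁻¹.mulVec (x t)) with hq_def
  -- each outer product is PSD
  have hPSDv : ∀ t : Fin n, (Matrix.vecMulVec (x t) (x t)).PosSemidef := by
    intro t
    have h : Matrix.vecMulVec (x t) (x t)
        = (Matrix.replicateRow (Unit) (x t)).conjTranspose * Matrix.replicateRow (Unit) (x t) := by
      ext i j
      simp [Matrix.vecMulVec_apply, Matrix.mul_apply, Matrix.conjTranspose_apply,
        Matrix.replicateRow_apply, mul_comm]
    rw [h]
    exact Matrix.posSemidef_conjTranspose_mul_self _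
  have hPSD : ∀ t : ℕ, (∑ u ∈ Finset.univ.filter (fun u : Fin n => (u : ℕ) < t),
      Matrix.vecMulVec (x u) (x u)).PosSemidef := by
    intro t
    refine Finset.sum_induction _ _ (fun a b ha hb => ha.add hb) ?_ ?_
    · exact Matrix.PosSemidef.zero
    · intro u _; exact hPSDv u
  have hPD : ∀ t : ℕ, (V t).PosDef := by
    intro t
    rw [hV t]
    refine Matrix.PosDef.add_posSemidef ?_ (hPSD t)
    have h : (lam • (1 : Matrix (Fin m) (Fin m) ℝ))
        = Matrix.diagonal (fun _ : Fin m => lam) := by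
      rw [Matrix.smul_one_eq_diagonal]
    rw [h]
    exact Matrix.posDef_diagonal_iff.2 fun _ => hlam
  have hdet_pos : ∀ t : ℕ, 0 < (V t).det := fun t => (hPD t).det_pos
  have hq_nonneg : ∀ t : Fin n, 0 ≤ q t := by
    intro t
    have h := ((hPD (t : ℕ)).inv.posSemidef).dotProduct_mulVec_nonneg (x t)
    simpa [hq_def] using h
  -- determinant recursion
  have hstep : ∀ t : Fin n, (V ((t : ℕ) + 1)).det = (V (t : ℕ)).det * (1 + q t) := by
    intro t
    have hfil : Finset.univ.filter (fun u : Fin n => (u : ℕ) < (t : ℕ) + 1)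
        = insert t (Finset.univ.filter (fun u : Fin n => (u : ℕ) < (t : ℕ))) := by
      ext u
      simp only [Finset.mem_filter, Finset.mem_univ, true_and, Finset.mem_insert]
      constructor
      · intro h
        rcases Nat.lt_succ_iff_lt_or_eq.1 h with h' | h'
        · exact Or.inr h'
        · exact Or.inl (Fin.ext h')
      · rintro (rfl | h)
        · omega
        · omega
    have hV' : V ((t : ℕ) + 1) = V (t : ℕ) + Matrix.vecMulVec (x t) (x t) := by
      rw [hV ((t : ℕ) + 1), hV (t : ℕ), hfil, Finset.sum_insert (by simp)]
      abel
    have hU : IsUnit (V (t : ℕ)).det := (hdet_pos (t : ℕ)).ne'.isUnit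
    rw [hV', Matrix.vecMulVec_eq (Unit), Matrix.det_add_replicateCol_mul_replicateRow hU]
    congr 1
    have hsym : ∀ i j : Fin m, (V (t : ℕ))⁻¹ i j = (V (t : ℕ))⁻¹ j i := by
      intro i j
      conv_lhs => rw [← (hPD (t : ℕ)).inv.isHermitian.eq]
      simp [Matrix.conjTranspose_apply]
    rw [Matrix.det_unique]
    simp only [Matrix.add_apply, Matrix.one_apply_eq, Matrix.mul_apply, Matrix.replicateRow_apply,
      Matrix.replicateCol_apply, dotProduct, Matrix.mulVec, hq_def, Finset.mul_sum]
    congr 1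
    refine Finset.sum_congr rfl fun i _ => ?_
    rw [Finset.sum_mul]
    refine Finset.sum_congr rfl fun j _ => ?_
    rw [hsym j i]
    ring
  -- telescoping
  have hlog_step : ∀ t : Fin n,
      Real.log (1 + q t) = Real.log ((V ((t : ℕ) + 1)).det) - Real.log ((V (t : ℕ)).det) := by
    intro t
    have h1q : (0:ℝ) < 1 + q t := by have := hq_nonneg t; linarith
    rw [hstep t, Real.log_mul (hdet_pos (t : ℕ)).ne' h1q.ne']
    ring
  have tele : ∑ t : Fin n, Real.log (1 + q t)
      = Real.log ((V n).det) - Real.log ((V 0).det) := by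
    calc ∑ t : Fin n, Real.log (1 + q t)
        = ∑ t : Fin n, (Real.log ((V ((t : ℕ) + 1)).det) - Real.log ((V (t : ℕ)).det)) :=
          Finset.sum_congr rfl fun t _ => hlog_step t
      _ = ∑ i ∈ Finset.range n,
            (Real.log ((V (i + 1)).det) - Real.log ((V i).det)) :=
          Fin.sum_univ_eq_sum_range (fun i => Real.log ((V (i + 1)).det) - Real.log ((V i).det)) n
      _ = Real.log ((V n).det) - Real.log ((V 0).det) :=
          Finset.sum_range_sub (fun i => Real.log ((V i).det)) n
  have hV0 : V 0 = lam • (1 : Matrix (Fin m) (Fin m) ℝ) := by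
    rw [hV 0]
    simp
  calc ∑ t : Fin n, min 1 (dotProduct (x t) ((V (t : ℕ))⁻¹.mulVec (x t)))
      = ∑ t : Fin n, min 1 (q t) := rfl
    _ ≤ ∑ t : Fin n, 2 * Real.log (1 + q t) :=
        Finset.sum_le_sum fun t _ => min_one_le_two_log (hq_nonneg t)
    _ = 2 * ∑ t : Fin n, Real.log (1 + q t) := by rw [Finset.mul_sum]
    _ = 2 * (Real.log ((V n).det) - Real.log ((V 0).det)) := by rw [tele]
    _ = 2 * Real.log ((V n).det / (lam • (1 : Matrix (Fin m) (Fin m) ℝ)).det) := by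
        rw [← hV0, ← Real.log_div (hdet_pos n).ne' (hdet_pos 0).ne']
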